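/- Let the parameters take the original benchmark values a1 = 7/1000, a2 = 7/250, a3 = 7/200, a4 = 1/50, a5 = 1/25, a6 = 1/50, a7 = 1/25, b1 = -727/20000, b2 = 3273/100000, w1 = -3467/50000, w2 = -227/100000. Then the Andrews squeezing system has no singular points: there is no point x ∈ ℝ^14 with p(x) = 0 at which the 13×14 Jacobian matrix of p has rank strictly less than 13. -/

import Mathlib

/-- The Jacobian matrix of a map `f : ℝ^n → ℝ^m` at a point `x`,
whose `(i, j)` entry is the partial derivative of the `i`-th component of `f`
with respect to the `j`-th variable. -/
noncomputable def jacobian {n m : ℕ} (f : (Fin n → ℝ) → Fin m → ℝ) (x : Fin n → ℝ) :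
    Matrix (Fin m) (Fin n) ℝ :=
  Matrix.of fun i j => fderiv ℝ (fun y => f y i) x (Pi.single j 1)

/-- The full constraint map `p : ℝ^14 → ℝ^13` of the Andrews squeezing mechanism,
in the variables `(c1, s1, c2, s2, c3, s3, c4, s4, c5, s5, c6, s6, c7, s7)`. -/
noncomputable def andrewsP (a1 a2 a3 a4 a5 a6 a7 b1 b2 w1 w2 : ℝ)
    (x : Fin 14 → ℝ) : Fin 13 → ℝ :=
  ![a1 * x 0 - a2 * (x 0 * x 2 - x 1 * x 3) - a3 * x 5 - b1,
    a1 * x 1 - a2 * (x 1 * x 2 + x 0 * x 3) + a3 * x 4 - b2,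
    a1 * x 0 - a2 * (x 0 * x 2 - x 1 * x 3) - a4 * (x 7 * x 8 + x 6 * x 9) - a5 * x 8 - w1,
    a1 * x 1 - a2 * (x 1 * x 2 + x 0 * x 3) + a4 * (x 6 * x 8 - x 7 * x 9) - a5 * x 9 - w2,
    a1 * x 0 - a2 * (x 0 * x 2 - x 1 * x 3) - a6 * (x 10 * x 12 - x 11 * x 13) - a7 * x 13 - w1,
    a1 * x 1 - a2 * (x 1 * x 2 + x 0 * x 3) - a6 * (x 11 * x 12 + x 10 * x 13) + a7 * x 12 - w2,
    x 0 ^ 2 + x 1 ^ 2 - 1,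
    x 2 ^ 2 + x 3 ^ 2 - 1,
    x 4 ^ 2 + x 5 ^ 2 - 1,
    x 6 ^ 2 + x 7 ^ 2 - 1,
    x 8 ^ 2 + x 9 ^ 2 - 1,
    x 10 ^ 2 + x 11 ^ 2 - 1,
    x 12 ^ 2 + x 13 ^ 2 - 1]

/-- A point `x ∈ ℝ^14` is a singular point of the Andrews constraint system if
`p(x) = 0` and the `13 × 14` Jacobian matrix of `p` at `x` has rank `< 13`. -/
def IsSingularAndrews (a1 a2 a3 a4 a5 a6 a7 b1 b2 w1 w2 : ℝ) (x : Fin 14 → ℝ) : Prop :=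
  andrewsP a1 a2 a3 a4 a5 a6 a7 b1 b2 w1 w2 x = 0 ∧
  (jacobian (andrewsP a1 a2 a3 a4 a5 a6 a7 b1 b2 w1 w2) x).rank < 13

noncomputable def pr (i : Fin 14) : (Fin 14 → ℝ) →L[ℝ] ℝ := ContinuousLinearMap.proj i

lemma hpr (i : Fin 14) (x : Fin 14 → ℝ) : HasFDerivAt (fun y : Fin 14 → ℝ => y i) (pr i) x :=
  (pr i).hasFDerivAt

lemma hsq (a b : Fin 14) (x : Fin 14 → ℝ) :
    HasFDerivAt (fun y : Fin 14 → ℝ => y a ^ 2 + y b ^ 2 - 1)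
      (x a • pr a + x a • pr a + (x b • pr b + x b • pr b)) x := by
  simpa only [pow_two, Pi.add_apply, Pi.mul_apply] using (((hpr a x).mul (hpr a x)).add ((hpr b x).mul (hpr b x))).sub_const 1

lemma onevar1 (T : ℝ)
    (ht2 : (T - 23520127/10000000000)^2 = 148618790673199/400000000000000000000)
    (hR : T^2 ≤ 21/100000000) : False := by
  nlinarith [ht2, hR, sq_nonneg T]

lemma onevar2 (T : ℝ)
    (ht2 : (T - 23520127/10000000000)^2 = 1133156454673199/400000000000000000000)
    (hQ : 101/100000000 ≤ T^2) (hR : T^2 ≤ 284/100000000) : False := by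
  rcases le_or_gt 0 T with h | h
  · have h2 : T ≤ 1686/1000000 := by nlinarith
    have h1 : 1004/1000000 ≤ T := by nlinarith
    nlinarith
  · have h1 : T ≤ -1004/1000000 := by nlinarith
    nlinarith

lemma annulus1 (u1 u2 : ℝ)
    (hu : (u1 + 727/20000)^2 + (u2 - 3273/100000)^2 = 49/40000)
    (hw : (u1 + 3467/50000)^2 + (u2 + 227/100000)^2 = 1/2500)
    (hr : u1^2 + u2^2 ≤ 49/40000) : False := by
  have hun : -3299/100000*u1 - 7/200*u2 = 32456131/20000000000 := by
    linear_combination (1/2)*hu - (1/2)*hw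
  have ht2 : ((-7/200*u1 + 3299/100000*u2) - 23520127/10000000000)^2
      = 148618790673199/400000000000000000000 := by
    linear_combination (62222933/40000000000 + 3299/200000*u1 + 7/400*u2) * hu +
      (30310671/40000000000 - 3299/200000*u1 - 7/400*u2) * hw
  have htq : (-7/200*u1 + 3299/100000*u2)^2
      = 23133401/10000000000*(u1^2+u2^2) - (32456131/20000000000)^2 := by
    linear_combination (-(-3299/100000*u1 - 7/200*u2) - 32456131/20000000000) * hun
  refine onevar1 _ ht2 (by nlinarith [htq, hr])

lemma annulus2 (u1 u2 : ℝ)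
    (hu : (u1 + 727/20000)^2 + (u2 - 3273/100000)^2 = 49/40000)
    (hw : (u1 + 3467/50000)^2 + (u2 + 227/100000)^2 = 9/2500)
    (hl : 441/1000000 ≤ u1^2 + u2^2)
    (hr : u1^2 + u2^2 ≤ 49/40000) : False := by
  have hun : -3299/100000*u1 - 7/200*u2 = 456131/20000000000 := by
    linear_combination (1/2)*hu - (1/2)*hw
  have ht2 : ((-7/200*u1 + 3299/100000*u2) - 23520127/10000000000)^2
      = 1133156454673199/400000000000000000000 := by
    linear_combination (94222933/40000000000 + 3299/200000*u1 + 7/400*u2) * hu +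
      (-1689329/40000000000 - 3299/200000*u1 - 7/400*u2) * hw
  have htq : (-7/200*u1 + 3299/100000*u2)^2
      = 23133401/10000000000*(u1^2+u2^2) - (456131/20000000000)^2 := by
    linear_combination (-(-3299/100000*u1 - 7/200*u2) - 456131/20000000000) * hun
  exact onevar2 _ ht2 (by nlinarith [htq, hl]) (by nlinarith [htq, hr])


set_option maxHeartbeats 2000000 in
lemma core (c1 s1 c2 s2 c3 s3 c4 s4 c5 s5 c6 s6 c7 s7
    l0 l1 l2 l3 l4 l5 m1 m2 m3 m4 m5 m6 m7 : ℝ)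
    (h1 : c1^2 + s1^2 = 1) (h2 : c2^2 + s2^2 = 1) (h3 : c3^2 + s3^2 = 1)
    (h4 : c4^2 + s4^2 = 1) (h5 : c5^2 + s5^2 = 1) (h6 : c6^2 + s6^2 = 1)
    (h7 : c7^2 + s7^2 = 1)
    (e1 : 7/1000*c1 - 7/250*(c1*c2 - s1*s2) - 7/200*s3 = -727/20000)
    (e2 : 7/1000*s1 - 7/250*(s1*c2 + c1*s2) + 7/200*c3 = 3273/100000)
    (e3 : 7/1000*c1 - 7/250*(c1*c2 - s1*s2) - 1/50*(s4*c5 + c4*s5) - 1/25*c5 = -3467/50000)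
    (e4 : 7/1000*s1 - 7/250*(s1*c2 + c1*s2) + 1/50*(c4*c5 - s4*s5) - 1/25*s5 = -227/100000)
    (e5 : 7/1000*c1 - 7/250*(c1*c2 - s1*s2) - 1/50*(c6*c7 - s6*s7) - 1/25*s7 = -3467/50000)
    (e6 : 7/1000*s1 - 7/250*(s1*c2 + c1*s2) - 1/50*(s6*c7 + c6*s7) + 1/25*c7 = -227/100000)
    (k1 : (l0+l2+l4)*(7/1000 - 7/250*c2) - (l1+l3+l5)*(7/250)*s2 + 2*m1*c1 = 0)
    (k2 : (l0+l2+l4)*(7/250)*s2 + (l1+l3+l5)*(7/1000 - 7/250*c2) + 2*m1*s1 = 0)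
    (k3 : -((l0+l2+l4)*(7/250)*c1) - (l1+l3+l5)*(7/250)*s1 + 2*m2*c2 = 0)
    (k4 : (l0+l2+l4)*(7/250)*s1 - (l1+l3+l5)*(7/250)*c1 + 2*m2*s2 = 0)
    (k5 : 7/200*l1 + 2*m3*c3 = 0)
    (k6 : -(7/200*l0) + 2*m3*s3 = 0)
    (k7 : -(1/50*s5*l2) + 1/50*c5*l3 + 2*m4*c4 = 0)
    (k8 : -(1/50*c5*l2) - 1/50*s5*l3 + 2*m4*s4 = 0)
    (k9 : (-(1/50*s4) - 1/25)*l2 + 1/50*c4*l3 + 2*m5*c5 = 0)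
    (k10 : -(1/50*c4*l2) + (-(1/50*s4) - 1/25)*l3 + 2*m5*s5 = 0)
    (k11 : -(1/50*c7*l4) - 1/50*s7*l5 + 2*m6*c6 = 0)
    (k12 : 1/50*s7*l4 - 1/50*c7*l5 + 2*m6*s6 = 0)
    (k13 : -(1/50*c6*l4) + (1/25 - 1/50*s6)*l5 + 2*m7*c7 = 0)
    (k14 : (1/50*s6 - 1/25)*l4 - 1/50*c6*l5 + 2*m7*s7 = 0)
    (hne : ¬(l0 = 0 ∧ l1 = 0 ∧ l2 = 0 ∧ l3 = 0 ∧ l4 = 0 ∧ l5 = 0 ∧ m1 = 0 ∧ m2 = 0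
      ∧ m3 = 0 ∧ m4 = 0 ∧ m5 = 0 ∧ m6 = 0 ∧ m7 = 0)) : False := by
  -- abbreviations are spelled out.  u1, u2 are the common first terms.
  have hu : (7/1000*c1 - 7/250*(c1*c2 - s1*s2) + 727/20000)^2
      + (7/1000*s1 - 7/250*(s1*c2 + c1*s2) - 3273/100000)^2 = 49/40000 := by
    linear_combination (7/1000*c1 - 7/250*(c1*c2 - s1*s2) + 727/20000 + 7/200*s3) * e1
      + (7/1000*s1 - 7/250*(s1*c2 + c1*s2) - 3273/100000 - 7/200*c3) * e2 + 49/40000 * h3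
  have hq : (7/1000*c1 - 7/250*(c1*c2 - s1*s2))^2 + (7/1000*s1 - 7/250*(s1*c2 + c1*s2))^2
      = (7/1000)^2 + (7/250)^2 - 2*(7/1000)*(7/250)*c2 := by
    linear_combination ((7/1000)^2 - 2*(7/1000)*(7/250)*c2 + (7/250)^2*(c2^2+s2^2)) * h1
      + (7/250)^2 * h2
  have hc2l : -1 ≤ c2 := by linarith [sq_nonneg (c2+1), sq_nonneg s2, h2]
  have hc2u : c2 ≤ 1 := by linarith [sq_nonneg (c2-1), sq_nonneg s2, h2]
  have hqu : (7/1000*c1 - 7/250*(c1*c2 - s1*s2))^2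
      + (7/1000*s1 - 7/250*(s1*c2 + c1*s2))^2 ≤ 49/40000 := by rw [hq]; linarith
  have hql : 441/1000000 ≤ (7/1000*c1 - 7/250*(c1*c2 - s1*s2))^2
      + (7/1000*s1 - 7/250*(s1*c2 + c1*s2))^2 := by rw [hq]; linarith
  -- c4 ≠ 0
  have hc4 : c4 ≠ 0 := by
    intro hc40
    have hs4 : (s4-1)*(s4+1) = 0 := by linear_combination h4 - c4*hc40
    rcases mul_eq_zero.mp hs4 with h | h
    · have hs : s4 = 1 := by linarith
      rw [hc40, hs] at e3 e4
      refine annulus2 _ _ hu ?_ hql hqu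
      linear_combination (7/1000*c1 - 7/250*(c1*c2 - s1*s2) + 3467/50000 + 3/50*c5) * e3
        + (7/1000*s1 - 7/250*(s1*c2 + c1*s2) + 227/100000 + 3/50*s5) * e4 + 9/2500 * h5
    · have hs : s4 = -1 := by linarith
      rw [hc40, hs] at e3 e4
      refine annulus1 _ _ hu ?_ hqu
      linear_combination (7/1000*c1 - 7/250*(c1*c2 - s1*s2) + 3467/50000 + 1/50*c5) * e3
        + (7/1000*s1 - 7/250*(s1*c2 + c1*s2) + 227/100000 + 1/50*s5) * e4 + 1/2500 * h5
  -- c6 ≠ 0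
  have hc6 : c6 ≠ 0 := by
    intro hc60
    have hs6 : (s6-1)*(s6+1) = 0 := by linear_combination h6 - c6*hc60
    rcases mul_eq_zero.mp hs6 with h | h
    · have hs : s6 = 1 := by linarith
      rw [hc60, hs] at e5 e6
      refine annulus1 _ _ hu ?_ hqu
      linear_combination (7/1000*c1 - 7/250*(c1*c2 - s1*s2) + 3467/50000 + 1/50*s7) * e5
        + (7/1000*s1 - 7/250*(s1*c2 + c1*s2) + 227/100000 - 1/50*c7) * e6 + 1/2500 * h7
    · have hs : s6 = -1 := by linarith
      rw [hc60, hs] at e5 e6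
      refine annulus2 _ _ hu ?_ hql hqu
      linear_combination (7/1000*c1 - 7/250*(c1*c2 - s1*s2) + 3467/50000 + 3/50*s7) * e5
        + (7/1000*s1 - 7/250*(s1*c2 + c1*s2) + 227/100000 - 3/50*c7) * e6 + 9/2500 * h7
  -- pair 4/5 multipliers vanish
  have hE : l2*s5 - l3*c5 = 0 := by
    linear_combination 25*(s4*k7 - c4*k8 - s5*k9 + c5*k10)
  have hr0 : c4*(l2*c5 + l3*s5) = 0 := by
    linear_combination 50*(s4*k7 - c4*k8) + s4*hE
  have hr1 : l2*c5 + l3*s5 = 0 := (mul_eq_zero.mp hr0).resolve_left hc4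
  have hl2 : l2 = 0 := by linear_combination s5*hE + c5*hr1 - l2*h5
  have hl3 : l3 = 0 := by linear_combination -c5*hE + s5*hr1 - l3*h5
  rw [hl2, hl3] at k7 k9 k10
  have hm4 : m4 = 0 := by
    have h' : m4*c4 = 0 := by linear_combination (1/2)*k7
    exact (mul_eq_zero.mp h').resolve_right hc4
  have hm5 : m5 = 0 := by linear_combination (c5/2)*k9 + (s5/2)*k10 - m5*h5
  -- pair 6/7 multipliers vanish
  have hE' : l4*c7 + l5*s7 = 0 := by
    linear_combination 25*(s7*k13 - c7*k14 - s6*k11 + c6*k12)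
  have hF0 : c6*(l4*s7 - l5*c7) = 0 := by
    linear_combination (-s6)*hE' - 50*(s6*k11 - c6*k12)
  have hF1 : l4*s7 - l5*c7 = 0 := (mul_eq_zero.mp hF0).resolve_left hc6
  have hl4 : l4 = 0 := by linear_combination c7*hE' + s7*hF1 - l4*h7
  have hl5 : l5 = 0 := by linear_combination s7*hE' - c7*hF1 - l5*h7
  rw [hl4, hl5] at k11 k13 k14
  have hm6 : m6 = 0 := by
    have h' : m6*c6 = 0 := by linear_combination (1/2)*k11
    exact (mul_eq_zero.mp h').resolve_right hc6
  have hm7 : m7 = 0 := by linear_combination (c7/2)*k13 + (s7/2)*k14 - m7*h7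
  -- pair 3 relation
  have hG : l0*c3 + l1*s3 = 0 := by linear_combination (200/7)*(s3*k5 - c3*k6)
  -- pairs 1/2
  rw [hl2, hl3, hl4, hl5] at k1 k2 k3 k4
  have hX : l0*s1 - l1*c1 = 0 := by
    linear_combination (1000/7)*(s1*k1 - c1*k2 - s2*k3 + c2*k4)
  have hsY : s2*(l0*c1 + l1*s1) = 0 := by
    linear_combination (-(250/7))*(s2*k3 - c2*k4) - c2*hX
  by_cases hs2 : s2 = 0
  · by_cases hl01 : l0 = 0 ∧ l1 = 0
    · obtain ⟨hl0, hl1⟩ := hl01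
      simp only [hl0, hl1] at k1 k2 k3 k4 k5 k6
      have hm1 : m1 = 0 := by linear_combination (c1/2)*k1 + (s1/2)*k2 - m1*h1
      have hm2 : m2 = 0 := by linear_combination (c2/2)*k3 + (s2/2)*k4 - m2*h2
      have hm3 : m3 = 0 := by linear_combination (c3/2)*k5 + (s3/2)*k6 - m3*h3
      exact hne ⟨hl0, hl1, hl2, hl3, hl4, hl5, hm1, hm2, hm3, hm4, hm5, hm6, hm7⟩
    · have hdet : c1*c3 + s1*s3 = 0 := by
        rcases not_and_or.mp hl01 with h0 | h0
        · have h' : l0*(c1*c3 + s1*s3) = 0 := by linear_combination s3*hX + c1*hG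
          exact (mul_eq_zero.mp h').resolve_left h0
        · have h' : l1*(c1*c3 + s1*s3) = 0 := by linear_combination s1*hG - c3*hX
          exact (mul_eq_zero.mp h').resolve_left h0
      have hb : -727/20000*c3 + 3273/100000*s3 = 0 := by
        linear_combination (7/1000 - 7/250*c2)*hdet
          + (7/250)*(s1*c3 - c1*s3)*hs2 - c3*e1 - s3*e2
      have hT2 : (-727/20000*s3 - 3273/100000*c3)^2 = 11962877/5000000000 := by
        linear_combination (11962877/5000000000)*h3 - (-727/20000*c3 + 3273/100000*s3)*hb
      have hqe : (7/1000*c1 - 7/250*(c1*c2 - s1*s2))^2 + (7/1000*s1 - 7/250*(s1*c2 + c1*s2))^2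
          = 11962877/5000000000 + 49/40000
            + 2*(7/200)*(-727/20000*s3 - 3273/100000*c3) := by
        linear_combination (7/1000*c1 - 7/250*(c1*c2 - s1*s2) - 727/20000 + 7/200*s3)*e1
          + (7/1000*s1 - 7/250*(s1*c2 + c1*s2) + 3273/100000 - 7/200*c3)*e2 + (49/40000)*h3
      have hc2sq : (c2-1)*(c2+1) = 0 := by linear_combination h2 - s2*hs2
      rcases mul_eq_zero.mp hc2sq with h | h
      · have hc2v : c2 = 1 := by linarith
        have hTlin : -727/20000*s3 - 3273/100000*c3 = -15882877/350000000 := by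
          linarith [hq, hqe, hc2v]
        rw [hTlin] at hT2
        norm_num at hT2
      · have hc2v : c2 = -1 := by linarith
        have hTlin : -727/20000*s3 - 3273/100000*c3 = -11962877/350000000 := by
          linarith [hq, hqe, hc2v]
        rw [hTlin] at hT2
        norm_num at hT2
  · have hY : l0*c1 + l1*s1 = 0 := (mul_eq_zero.mp hsY).resolve_left hs2
    have hl0 : l0 = 0 := by linear_combination s1*hX + c1*hY - l0*h1
    have hl1 : l1 = 0 := by linear_combination -c1*hX + s1*hY - l1*h1
    simp only [hl0, hl1] at k1 k2 k3 k4 k5 k6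
    have hm1 : m1 = 0 := by linear_combination (c1/2)*k1 + (s1/2)*k2 - m1*h1
    have hm2 : m2 = 0 := by linear_combination (c2/2)*k3 + (s2/2)*k4 - m2*h2
    have hm3 : m3 = 0 := by linear_combination (c3/2)*k5 + (s3/2)*k6 - m3*h3
    exact hne ⟨hl0, hl1, hl2, hl3, hl4, hl5, hm1, hm2, hm3, hm4, hm5, hm6, hm7⟩

set_option maxHeartbeats 4000000 in
theorem benchmark_no_singular_points :
    ¬ ∃ x : Fin 14 → ℝ,
      IsSingularAndrews (7/1000) (7/250) (7/200) (1/50) (1/25) (1/50) (1/25)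
        (-727/20000) (3273/100000) (-3467/50000) (-227/100000) x := by
  rintro ⟨x, hp, hrank⟩
  -- extract a left-kernel vector
  obtain ⟨l, ⟨i0, hi0⟩, hker⟩ : ∃ l : Fin 13 → ℝ, (∃ i, l i ≠ 0) ∧ ∀ j, ∑ i, l i *
      (jacobian (andrewsP (7/1000) (7/250) (7/200) (1/50) (1/25) (1/50) (1/25)
        (-727/20000) (3273/100000) (-3467/50000) (-227/100000)) x) i j = 0 := by
    set M := jacobian (andrewsP (7/1000) (7/250) (7/200) (1/50) (1/25) (1/50) (1/25)
        (-727/20000) (3273/100000) (-3467/50000) (-227/100000)) x with hM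
    have hni : ¬ LinearIndependent ℝ (fun i => M i) := by
      intro hli
      have := hli.rank_matrix
      rw [Fintype.card_fin] at this
      rw [show M.rank = 13 from this] at hrank
      exact absurd hrank (lt_irrefl _)
    rw [Fintype.not_linearIndependent_iff] at hni
    obtain ⟨g, hg, i1, hi1⟩ := hni
    refine ⟨g, ⟨i1, hi1⟩, fun j => ?_⟩
    have := congrFun hg j
    simpa [Finset.sum_apply] using this
  -- derivatives of the 13 components
  have H0 : HasFDerivAt (fun y : Fin 14 → ℝ => andrewsP (7/1000) (7/250) (7/200) (1/50) (1/25) (1/50) (1/25) (-727/20000) (3273/100000) (-3467/50000) (-227/100000) y 0) _ x :=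
    ((((hpr 0 x).const_mul (7/1000)).sub
      ((((hpr 0 x).mul (hpr 2 x)).sub ((hpr 1 x).mul (hpr 3 x))).const_mul (7/250))).sub
      ((hpr 5 x).const_mul (7/200))).sub_const (-727/20000)
  have H1 : HasFDerivAt (fun y : Fin 14 → ℝ => andrewsP (7/1000) (7/250) (7/200) (1/50) (1/25) (1/50) (1/25) (-727/20000) (3273/100000) (-3467/50000) (-227/100000) y 1) _ x :=
    ((((hpr 1 x).const_mul (7/1000)).sub
      ((((hpr 1 x).mul (hpr 2 x)).add ((hpr 0 x).mul (hpr 3 x))).const_mul (7/250))).add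
      ((hpr 4 x).const_mul (7/200))).sub_const (3273/100000)
  have H2 : HasFDerivAt (fun y : Fin 14 → ℝ => andrewsP (7/1000) (7/250) (7/200) (1/50) (1/25) (1/50) (1/25) (-727/20000) (3273/100000) (-3467/50000) (-227/100000) y 2) _ x :=
    (((((hpr 0 x).const_mul (7/1000)).sub
      ((((hpr 0 x).mul (hpr 2 x)).sub ((hpr 1 x).mul (hpr 3 x))).const_mul (7/250))).sub
      ((((hpr 7 x).mul (hpr 8 x)).add ((hpr 6 x).mul (hpr 9 x))).const_mul (1/50))).sub
      ((hpr 8 x).const_mul (1/25))).sub_const (-3467/50000)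
  have H3 : HasFDerivAt (fun y : Fin 14 → ℝ => andrewsP (7/1000) (7/250) (7/200) (1/50) (1/25) (1/50) (1/25) (-727/20000) (3273/100000) (-3467/50000) (-227/100000) y 3) _ x :=
    (((((hpr 1 x).const_mul (7/1000)).sub
      ((((hpr 1 x).mul (hpr 2 x)).add ((hpr 0 x).mul (hpr 3 x))).const_mul (7/250))).add
      ((((hpr 6 x).mul (hpr 8 x)).sub ((hpr 7 x).mul (hpr 9 x))).const_mul (1/50))).sub
      ((hpr 9 x).const_mul (1/25))).sub_const (-227/100000)
  have H4 : HasFDerivAt (fun y : Fin 14 → ℝ => andrewsP (7/1000) (7/250) (7/200) (1/50) (1/25) (1/50) (1/25) (-727/20000) (3273/100000) (-3467/50000) (-227/100000) y 4) _ x :=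
    (((((hpr 0 x).const_mul (7/1000)).sub
      ((((hpr 0 x).mul (hpr 2 x)).sub ((hpr 1 x).mul (hpr 3 x))).const_mul (7/250))).sub
      ((((hpr 10 x).mul (hpr 12 x)).sub ((hpr 11 x).mul (hpr 13 x))).const_mul (1/50))).sub
      ((hpr 13 x).const_mul (1/25))).sub_const (-3467/50000)
  have H5 : HasFDerivAt (fun y : Fin 14 → ℝ => andrewsP (7/1000) (7/250) (7/200) (1/50) (1/25) (1/50) (1/25) (-727/20000) (3273/100000) (-3467/50000) (-227/100000) y 5) _ x :=
    (((((hpr 1 x).const_mul (7/1000)).sub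
      ((((hpr 1 x).mul (hpr 2 x)).add ((hpr 0 x).mul (hpr 3 x))).const_mul (7/250))).sub
      ((((hpr 11 x).mul (hpr 12 x)).add ((hpr 10 x).mul (hpr 13 x))).const_mul (1/50))).add
      ((hpr 12 x).const_mul (1/25))).sub_const (-227/100000)
  have H6 : HasFDerivAt (fun y : Fin 14 → ℝ => andrewsP (7/1000) (7/250) (7/200) (1/50) (1/25) (1/50) (1/25) (-727/20000) (3273/100000) (-3467/50000) (-227/100000) y 6) ((x 0 • pr 0 + x 0 • pr 0) + (x 1 • pr 1 + x 1 • pr 1)) x := hsq 0 1 x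
  have H7 : HasFDerivAt (fun y : Fin 14 → ℝ => andrewsP (7/1000) (7/250) (7/200) (1/50) (1/25) (1/50) (1/25) (-727/20000) (3273/100000) (-3467/50000) (-227/100000) y 7) ((x 2 • pr 2 + x 2 • pr 2) + (x 3 • pr 3 + x 3 • pr 3)) x := hsq 2 3 x
  have H8 : HasFDerivAt (fun y : Fin 14 → ℝ => andrewsP (7/1000) (7/250) (7/200) (1/50) (1/25) (1/50) (1/25) (-727/20000) (3273/100000) (-3467/50000) (-227/100000) y 8) ((x 4 • pr 4 + x 4 • pr 4) + (x 5 • pr 5 + x 5 • pr 5)) x := hsq 4 5 x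
  have H9 : HasFDerivAt (fun y : Fin 14 → ℝ => andrewsP (7/1000) (7/250) (7/200) (1/50) (1/25) (1/50) (1/25) (-727/20000) (3273/100000) (-3467/50000) (-227/100000) y 9) ((x 6 • pr 6 + x 6 • pr 6) + (x 7 • pr 7 + x 7 • pr 7)) x := hsq 6 7 x
  have H10 : HasFDerivAt (fun y : Fin 14 → ℝ => andrewsP (7/1000) (7/250) (7/200) (1/50) (1/25) (1/50) (1/25) (-727/20000) (3273/100000) (-3467/50000) (-227/100000) y 10) ((x 8 • pr 8 + x 8 • pr 8) + (x 9 • pr 9 + x 9 • pr 9)) x := hsq 8 9 x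
  have H11 : HasFDerivAt (fun y : Fin 14 → ℝ => andrewsP (7/1000) (7/250) (7/200) (1/50) (1/25) (1/50) (1/25) (-727/20000) (3273/100000) (-3467/50000) (-227/100000) y 11) ((x 10 • pr 10 + x 10 • pr 10) + (x 11 • pr 11 + x 11 • pr 11)) x := hsq 10 11 x
  have H12 : HasFDerivAt (fun y : Fin 14 → ℝ => andrewsP (7/1000) (7/250) (7/200) (1/50) (1/25) (1/50) (1/25) (-727/20000) (3273/100000) (-3467/50000) (-227/100000) y 12) ((x 12 • pr 12 + x 12 • pr 12) + (x 13 • pr 13 + x 13 • pr 13)) x := hsq 12 13 x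
  simp only [jacobian, Matrix.of_apply] at hker
  have K0 := hker 0
  have K1 := hker 1
  have K2 := hker 2
  have K3 := hker 3
  have K4 := hker 4
  have K5 := hker 5
  have K6 := hker 6
  have K7 := hker 7
  have K8 := hker 8
  have K9 := hker 9
  have K10 := hker 10
  have K11 := hker 11
  have K12 := hker 12
  have K13 := hker 13
  simp only [Fin.sum_univ_succ, Finset.univ_unique, Fin.default_eq_zero, Finset.sum_singleton,
      Fin.succ_zero_eq_one, Fin.succ_one_eq_two,
      show (Fin.succ (2 : Fin 3) : Fin 4) = 3 from rfl, show (Fin.succ (2 : Fin 4) : Fin 5) = 3 from rfl, show (Fin.succ (3 : Fin 4) : Fin 5) = 4 from rfl, show (Fin.succ (2 : Fin 5) : Fin 6) = 3 from rfl, show (Fin.succ (3 : Fin 5) : Fin 6) = 4 from rfl, show (Fin.succ (4 : Fin 5) : Fin 6) = 5 from rfl, show (Fin.succ (2 : Fin 6) : Fin 7) = 3 from rfl, show (Fin.succ (3 : Fin 6) : Fin 7) = 4 from rfl, show (Fin.succ (4 : Fin 6) : Fin 7) = 5 from rfl, show (Fin.succ (5 : Fin 6) : Fin 7) = 6 from rfl,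 show (Fin.succ (2 : Fin 7) : Fin 8) = 3 from rfl, show (Fin.succ (3 : Fin 7) : Fin 8) = 4 from rfl, show (Fin.succ (4 : Fin 7) : Fin 8) = 5 from rfl, show (Fin.succ (5 : Fin 7) : Fin 8) = 6 from rfl, show (Fin.succ (6 : Fin 7) : Fin 8) = 7 from rfl, show (Fin.succ (2 : Fin 8) : Fin 9) = 3 from rfl, show (Fin.succ (3 : Fin 8) : Fin 9) = 4 from rfl, show (Fin.succ (4 : Fin 8) : Fin 9) = 5 from rfl, show (Fin.succ (5 : Fin 8) : Fin 9) = 6 from rfl, show (Fin.succ (6 : Fin 8) : Fin 9) = 7 from rfl, show (Fin.succ (7 : Fin 8) : Fin 9) = 8 from rfl, show (Fin.succ (2 : Fin 9) : Fin 10) = 3 from rfl, show (Fin.succ (3 : Fin 9) : Fin 10) = 4 from rfl, show (Fin.succ (4 : Fin 9) : Fin 10) = 5 from rfl, show (Fin.succ (5 : Fin 9) : Fin 10) = 6 from rfl, show (Fin.succ (6 : Fin 9) : Fin 10) = 7 from rfl, show (Fin.succ (7 : Fin 9) : Fin 10) = 8 from rfl, show (Fin.succ (8 : Fin 9) : Fin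 10) = 9 from rfl, show (Fin.succ (2 : Fin 10) : Fin 11) = 3 from rfl, show (Fin.succ (3 : Fin 10) : Fin 11) = 4 from rfl, show (Fin.succ (4 : Fin 10) : Fin 11) = 5 from rfl, show (Fin.succ (5 : Fin 10) : Fin 11) = 6 from rfl, show (Fin.succ (6 : Fin 10) : Fin 11) = 7 from rfl, show (Fin.succ (7 : Fin 10) : Fin 11) = 8 from rfl, show (Fin.succ (8 : Fin 10) : Fin 11) = 9 from rfl, show (Fin.succ (9 : Fin 10) : Fin 11) = 10 from rfl, show (Fin.succ (2 : Fin 11) : Fin 12) = 3 from rfl, show (Fin.succ (3 : Fin 11) : Fin 12) = 4 from rfl, show (Fin.succ (4 : Fin 11) : Fin 12) = 5 from rfl, show (Fin.succ (5 : Fin 11) : Fin 12) = 6 from rfl, show (Fin.succ (6 : Fin 11) : Fin 12) = 7 from rfl, show (Fin.succ (7 : Fin 11) : Fin 12) = 8 from rfl, show (Fin.succ (8 : Fin 11) : Fin 12) = 9 from rfl, show (Fin.succ (9 : Fin 11) : Fin 12) = 10 from rfl, show (Fin.succ (10 : Fin 11) : Fin 12) = 11 from rfl, show (Fin.succ (2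 : Fin 12) : Fin 13) = 3 from rfl, show (Fin.succ (3 : Fin 12) : Fin 13) = 4 from rfl, show (Fin.succ (4 : Fin 12) : Fin 13) = 5 from rfl, show (Fin.succ (5 : Fin 12) : Fin 13) = 6 from rfl, show (Fin.succ (6 : Fin 12) : Fin 13) = 7 from rfl, show (Fin.succ (7 : Fin 12) : Fin 13) = 8 from rfl, show (Fin.succ (8 : Fin 12) : Fin 13) = 9 from rfl, show (Fin.succ (9 : Fin 12) : Fin 13) = 10 from rfl, show (Fin.succ (10 : Fin 12) : Fin 13) = 11 from rfl, show (Fin.succ (11 : Fin 12) : Fin 13) = 12 from rfl,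
      H0.fderiv, H1.fderiv, H2.fderiv, H3.fderiv, H4.fderiv, H5.fderiv, H6.fderiv,
      H7.fderiv, H8.fderiv, H9.fderiv, H10.fderiv, H11.fderiv, H12.fderiv]
    at K0 K1 K2 K3 K4 K5 K6 K7 K8 K9 K10 K11 K12 K13
  simp (config := { decide := true }) only [ContinuousLinearMap.add_apply,
    ContinuousLinearMap.sub_apply, ContinuousLinearMap.smul_apply, ContinuousLinearMap.coe_smul',
    Pi.smul_apply, pr, ContinuousLinearMap.proj_apply, Pi.single_apply, smul_eq_mul, if_true, if_false]
    at K0 K1 K2 K3 K4 K5 K6 K7 K8 K9 K10 K11 K12 K13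
  -- p-equations
  have hp0 : 7/1000 * x 0 - 7/250 * (x 0 * x 2 - x 1 * x 3) - 7/200 * x 5 - (-727/20000) = 0 :=
    congrFun hp 0
  have hp1 : 7/1000 * x 1 - 7/250 * (x 1 * x 2 + x 0 * x 3) + 7/200 * x 4 - 3273/100000 = 0 :=
    congrFun hp 1
  have hp2 : 7/1000 * x 0 - 7/250 * (x 0 * x 2 - x 1 * x 3) - 1/50 * (x 7 * x 8 + x 6 * x 9)
      - 1/25 * x 8 - (-3467/50000) = 0 := congrFun hp 2
  have hp3 : 7/1000 * x 1 - 7/250 * (x 1 * x 2 + x 0 * x 3) + 1/50 * (x 6 * x 8 - x 7 * x 9)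
      - 1/25 * x 9 - (-227/100000) = 0 := congrFun hp 3
  have hp4 : 7/1000 * x 0 - 7/250 * (x 0 * x 2 - x 1 * x 3) - 1/50 * (x 10 * x 12 - x 11 * x 13)
      - 1/25 * x 13 - (-3467/50000) = 0 := congrFun hp 4
  have hp5 : 7/1000 * x 1 - 7/250 * (x 1 * x 2 + x 0 * x 3) - 1/50 * (x 11 * x 12 + x 10 * x 13)
      + 1/25 * x 12 - (-227/100000) = 0 := congrFun hp 5
  have hp6 : x 0 ^ 2 + x 1 ^ 2 - 1 = 0 := congrFun hp 6
  have hp7 : x 2 ^ 2 + x 3 ^ 2 - 1 = 0 := congrFun hp 7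
  have hp8 : x 4 ^ 2 + x 5 ^ 2 - 1 = 0 := congrFun hp 8
  have hp9 : x 6 ^ 2 + x 7 ^ 2 - 1 = 0 := congrFun hp 9
  have hp10 : x 8 ^ 2 + x 9 ^ 2 - 1 = 0 := congrFun hp 10
  have hp11 : x 10 ^ 2 + x 11 ^ 2 - 1 = 0 := congrFun hp 11
  have hp12 : x 12 ^ 2 + x 13 ^ 2 - 1 = 0 := congrFun hp 12
  refine core (x 0) (x 1) (x 2) (x 3) (x 4) (x 5) (x 6) (x 7) (x 8) (x 9) (x 10) (x 11)
    (x 12) (x 13) (l 0) (l 1) (l 2) (l 3) (l 4) (l 5) (l 6) (l 7) (l 8) (l 9) (l 10) (l 11)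
    (l 12)
    (by linear_combination hp6) (by linear_combination hp7) (by linear_combination hp8)
    (by linear_combination hp9) (by linear_combination hp10) (by linear_combination hp11)
    (by linear_combination hp12)
    (by linear_combination hp0) (by linear_combination hp1) (by linear_combination hp2)
    (by linear_combination hp3) (by linear_combination hp4) (by linear_combination hp5)
    (by linear_combination K0) (by linear_combination K1) (by linear_combination K2)
    (by linear_combination K3) (by linear_combination K4) (by linear_combination K5)
    (by linear_combination K6) (by linear_combination K7) (by linear_combination K8)
    (by linear_combination K9) (by linear_combination K10) (by linear_combination K11)
    (by linear_combination K12) (by linear_combination K13)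
    ?_
  intro hall
  apply hi0
  obtain ⟨z0, z1, z2, z3, z4, z5, z6, z7, z8, z9, z10, z11, z12⟩ := hall
  fin_cases i0 <;> assumption
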